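/- In the linear SEM setting, for fixed κ ∈ [0,1), the worst-case interventional mean squared prediction error satisfies sup_{v ∈ C(κ)} E^{do(A:=v)}[(Y − α^T Z_*)²] = l_OLS(α) + (κ/(1-κ))·l_IV(α) for every α, where l_OLS(α) = E[(Y − α^T Z_*)²] and l_IV(α) = E[A(Y−α^T Z_*)]^T E[AA^T]^{-1} E[A(Y−α^T Z_*)]. Consequently the population K-class estimand α_K(κ) = argmin_α {(1-κ)l_OLS(α) + κ·l_IV(α)} equals argmin_α sup_{v ∈ C(κ)} E^{do(A:=v)}[(Y − α^T Z_*)²]. -/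

import Mathlib

open Matrix MeasureTheory ProbabilityTheory

lemma aux_l2_mul_int {Ω : Type*} [MeasurableSpace Ω] {μ : Measure Ω}
    {f g : Ω → ℝ} (hf : MemLp f 2 μ) (hg : MemLp g 2 μ) :
    Integrable (fun ω => f ω * g ω) μ := by
  rw [← memLp_one_iff_integrable]
  have h := hg.smul (φ := f) hf (p := 2) (q := 2) (r := 1)
  exact h

lemma aux_integral_dot_sq {Ω n : Type*} [MeasurableSpace Ω] {μ : Measure Ω} [Fintype n]
    (c : n → ℝ) (F : Ω → n → ℝ) (hF : ∀ i, MemLp (fun ω => F ω i) 2 μ) :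
    ∫ ω, (c ⬝ᵥ F ω) ^ 2 ∂μ = ∑ i, ∑ j, c i * c j * ∫ ω, F ω i * F ω j ∂μ := by
  have hptwise : ∀ ω, (c ⬝ᵥ F ω) ^ 2 = ∑ i, ∑ j, c i * c j * (F ω i * F ω j) := by
    intro ω
    simp only [dotProduct, sq, Finset.sum_mul_sum]
    refine Finset.sum_congr rfl fun i _ => Finset.sum_congr rfl fun j _ => by ring
  simp only [hptwise]
  rw [integral_finset_sum]
  · refine Finset.sum_congr rfl fun i _ => ?_
    rw [integral_finset_sum]
    · exact Finset.sum_congr rfl fun j _ => (integral_const_mul _ _)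
    · exact fun j _ => (aux_l2_mul_int (hF i) (hF j)).const_mul _
  · intro i _
    exact integrable_finset_sum _ fun j _ => (aux_l2_mul_int (hF i) (hF j)).const_mul _

lemma aux_det_one_sub_ne_zero {ι : Type*} [Fintype ι] [DecidableEq ι] (B : Matrix ι ι ℝ)
    (hB : ∀ z ∈ spectrum ℂ (B.map (algebraMap ℝ ℂ)), ‖z‖ < 1) :
    IsUnit (1 - Bᵀ).det := by
  rw [← Matrix.transpose_one, ← Matrix.transpose_sub, Matrix.det_transpose]
  rw [isUnit_iff_ne_zero]
  intro h0
  have hC : ((1 : Matrix ι ι ℂ) - B.map (algebraMap ℝ ℂ)).det = 0 := by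
    have h : ((1 : Matrix ι ι ℂ) - B.map (algebraMap ℝ ℂ)) = (1 - B).map (algebraMap ℝ ℂ) := by
      rw [Matrix.map_sub _ (map_sub _)]
      congr 1
      ext i j
      simp [Matrix.one_apply]; split <;> simp
    rw [h]
    have h2 : (1 - B).map (algebraMap ℝ ℂ) = (RingHom.mapMatrix (algebraMap ℝ ℂ)) (1 - B) := rfl
    rw [h2, ← RingHom.map_det, h0, map_zero]
  have h1 : (1 : ℂ) ∈ spectrum ℂ (B.map (algebraMap ℝ ℂ)) := by
    rw [spectrum.mem_iff]
    intro hu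
    rw [Matrix.isUnit_iff_isUnit_det, isUnit_iff_ne_zero] at hu
    apply hu
    simpa using hC
  have := hB 1 h1
  simp at this

lemma aux_sel_split {ι ιZ : Type*} [Fintype ι] [DecidableEq ι] [Fintype ιZ] {q : ℕ}
    (sel : ιZ → ι ⊕ Fin q) (α : ιZ → ℝ) (s : ι → ℝ) (v : Fin q → ℝ) :
    α ⬝ᵥ (fun j => Sum.elim s v (sel j)) =
      (fun i => ∑ j, if sel j = Sum.inl i then α j else 0) ⬝ᵥ s +
      (fun k => ∑ j, if sel j = Sum.inr k then α j else 0) ⬝ᵥ v := by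
  simp only [dotProduct, Finset.sum_mul]
  rw [Finset.sum_comm (s := (Finset.univ : Finset ι))]
  rw [Finset.sum_comm (s := (Finset.univ : Finset (Fin q)))]
  rw [← Finset.sum_add_distrib]
  refine Finset.sum_congr rfl fun j _ => ?_
  cases h : sel j with
  | inl i₀ =>
    simp only [h, Sum.elim_inl, Sum.inl.injEq, reduceCtorEq, if_false, ite_mul, zero_mul,
      Finset.sum_const_zero, add_zero]
    rw [Finset.sum_ite_eq]
    simp
  | inr k₀ =>
    simp only [h, Sum.elim_inr, Sum.inr.injEq, reduceCtorEq, if_false, ite_mul, zero_mul,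
      Finset.sum_const_zero, zero_add]
    rw [Finset.sum_ite_eq]
    simp

lemma aux_dot_mulVec {n : Type*} [Fintype n] (a : n → ℝ) (V : Matrix n n ℝ) :
    a ⬝ᵥ V.mulVec a = ∑ i, ∑ j, a i * a j * V i j := by
  simp only [dotProduct, Matrix.mulVec, Finset.mul_sum]
  exact Finset.sum_congr rfl fun i _ => Finset.sum_congr rfl fun j _ => by ring

/-- Distributional robustness of K-class estimands in a linear SEM
`S = BᵀS + Mᵀ A + ε` (row form `[Y Xᵀ Hᵀ] = [Y Xᵀ Hᵀ]B + AᵀM + εᵀ`), with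
spectral radius of `B` strictly less than one, `ε ⟂ A`, `E[ε] = 0`, finite
second moments and `E[AAᵀ] ≻ 0`. For a subvector `Z_*` of `(X, A)` (selected by
`sel`, avoiding the target coordinate `y`), and fixed `κ ∈ [0,1)`:
the worst-case interventional mean squared prediction error over `C(κ)`
equals `l_OLS(α) + (κ/(1-κ))·l_IV(α)` for every `α`, and consequently the
population K-class estimand minimizes the worst-case error. -/
theorem kclass_distributional_robustness
    {Ω : Type*} [MeasurableSpace Ω] (μ : Measure Ω) [IsProbabilityMeasure μ]
    {ι ιZ : Type*} [Fintype ι] [DecidableEq ι] [Fintype ιZ] {q : ℕ}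
    (B : Matrix ι ι ℝ) (M : Matrix (Fin q) ι ℝ) (y : ι)
    (hB : ∀ z ∈ spectrum ℂ (B.map (algebraMap ℝ ℂ)), ‖z‖ < 1)
    (A : Ω → (Fin q → ℝ)) (ε : Ω → (ι → ℝ)) (S : Ω → (ι → ℝ))
    (hAmeas : Measurable A) (hεmeas : Measurable ε)
    (hA2 : ∀ i, MemLp (fun ω => A ω i) 2 μ)
    (hε2 : ∀ i, MemLp (fun ω => ε ω i) 2 μ)
    (hindep : IndepFun A ε μ)
    (hεmean : ∀ i, ∫ ω, ε ω i ∂μ = 0)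
    (hMA : (Matrix.of fun i j => ∫ ω, A ω i * A ω j ∂μ :
        Matrix (Fin q) (Fin q) ℝ).PosDef)
    (hSEM : ∀ ω, S ω = Bᵀ.mulVec (S ω) + Mᵀ.mulVec (A ω) + ε ω)
    (sel : ιZ → ι ⊕ Fin q) (hselinj : Function.Injective sel)
    (hsel : ∀ j, sel j ≠ Sum.inl y)
    (κ : ℝ) (hκ0 : 0 ≤ κ) (hκ1 : κ < 1) :
    let MA : Matrix (Fin q) (Fin q) ℝ := Matrix.of fun i j => ∫ ω, A ω i * A ω j ∂μ
    let Zs : Ω → (ιZ → ℝ) := fun ω j => Sum.elim (S ω) (A ω) (sel j)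
    let lOLS : (ιZ → ℝ) → ℝ := fun α => ∫ ω, (S ω y - α ⬝ᵥ Zs ω) ^ 2 ∂μ
    let lIV : (ιZ → ℝ) → ℝ := fun α =>
      (fun i => ∫ ω, A ω i * (S ω y - α ⬝ᵥ Zs ω) ∂μ) ⬝ᵥ
        (MA⁻¹.mulVec fun i => ∫ ω, A ω i * (S ω y - α ⬝ᵥ Zs ω) ∂μ)
    let W : (ιZ → ℝ) → Set ℝ := fun α =>
      {x : ℝ | ∃ v : Ω → (Fin q → ℝ), ∃ Sv : Ω → (ι → ℝ), Measurable v ∧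
        (∀ i, MemLp (fun ω => v ω i) 2 μ) ∧
        (∀ i j, ∫ ω, v ω i * ε ω j ∂μ = 0) ∧
        ((1 / (1 - κ)) • MA -
            (Matrix.of fun i j => ∫ ω, v ω i * v ω j ∂μ) :
          Matrix (Fin q) (Fin q) ℝ).PosSemidef ∧
        (∀ ω, Sv ω = Bᵀ.mulVec (Sv ω) + Mᵀ.mulVec (v ω) + ε ω) ∧
        x = ∫ ω, (Sv ω y - α ⬝ᵥ fun j => Sum.elim (Sv ω) (v ω) (sel j)) ^ 2 ∂μ}
    (∀ α : ιZ → ℝ, sSup (W α) = lOLS α + (κ / (1 - κ)) * lIV α) ∧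
      ∀ α0 : ιZ → ℝ,
        (∀ α, (1 - κ) * lOLS α0 + κ * lIV α0 ≤ (1 - κ) * lOLS α + κ * lIV α) ↔
          (∀ α, sSup (W α0) ≤ sSup (W α)) := by
  intro MA Zs lOLS lIV W
  classical
  have h1κ : (0:ℝ) < 1 - κ := by linarith
  have hdet : IsUnit (1 - Bᵀ).det := aux_det_one_sub_ne_zero B hB
  set C : Matrix ι ι ℝ := (1 - Bᵀ)⁻¹ with hCdef
  have hMAapp : ∀ i k, MA i k = ∫ ω, A ω i * A ω k ∂μ := fun i k => rfl
  have hMAdet : IsUnit MA.det := hMA.det_pos.ne'.isUnit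
  -- solution representation
  have hrepr : ∀ (v : Ω → Fin q → ℝ) (Sv : Ω → ι → ℝ),
      (∀ ω, Sv ω = Bᵀ.mulVec (Sv ω) + Mᵀ.mulVec (v ω) + ε ω) →
      ∀ ω, Sv ω = C.mulVec (Mᵀ.mulVec (v ω) + ε ω) := by
    intro v Sv h ω
    have h2 : Sv ω = Bᵀ.mulVec (Sv ω) + (Mᵀ.mulVec (v ω) + ε ω) := by
      rw [← add_assoc]; exact h ω
    have h1 : (1 - Bᵀ).mulVec (Sv ω) = Mᵀ.mulVec (v ω) + ε ω := by
      rw [Matrix.sub_mulVec, Matrix.one_mulVec]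
      exact sub_eq_of_eq_add' h2
    calc Sv ω = (C * (1 - Bᵀ)).mulVec (Sv ω) := by
          rw [Matrix.nonsing_inv_mul _ hdet, Matrix.one_mulVec]
      _ = C.mulVec ((1 - Bᵀ).mulVec (Sv ω)) := by rw [Matrix.mulVec_mulVec]
      _ = C.mulVec (Mᵀ.mulVec (v ω) + ε ω) := by rw [h1]
  -- constructed solutions satisfy the SEM
  have hSEM' : ∀ (r : ι → ℝ),
      C.mulVec r = Bᵀ.mulVec (C.mulVec r) + r := by
    intro r
    have h1 : (1 - Bᵀ).mulVec (C.mulVec r) = r := by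
      rw [Matrix.mulVec_mulVec, Matrix.mul_nonsing_inv _ hdet, Matrix.one_mulVec]
    have h2 : C.mulVec r - Bᵀ.mulVec (C.mulVec r) = r := by
      rw [Matrix.sub_mulVec, Matrix.one_mulVec] at h1
      exact h1
    exact eq_add_of_sub_eq' h2
  -- A and ε are uncorrelated
  have hAε : ∀ (i : Fin q) (j : ι), ∫ ω, A ω i * ε ω j ∂μ = 0 := by
    intro i j
    have hi : IndepFun (fun ω => A ω i) (fun ω => ε ω j) μ :=
      hindep.comp (measurable_pi_apply i) (measurable_pi_apply j)
    have := hi.integral_mul_eq_mul_integral (hA2 i).aestronglyMeasurable (hε2 j).aestronglyMeasurable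
    simpa [Pi.mul_apply, hεmean j] using this
  -- main per-α computation
  have hsup : ∀ α : ιZ → ℝ, sSup (W α) = lOLS α + (κ / (1 - κ)) * lIV α := by
    intro α
    set wv : ι → ℝ := fun i => ∑ j, if sel j = Sum.inl i then α j else 0 with hwv
    set uv : Fin q → ℝ := fun k => ∑ j, if sel j = Sum.inr k then α j else 0 with huv
    set cy : ι → ℝ := Pi.single y 1 - wv with hcy
    set b : ι → ℝ := cy ᵥ* C with hbdef
    set a : Fin q → ℝ := b ᵥ* Mᵀ - uv with hadef
    -- residual representation
    have hres : ∀ (v : Ω → Fin q → ℝ) (Sv : Ω → ι → ℝ),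
        (∀ ω, Sv ω = Bᵀ.mulVec (Sv ω) + Mᵀ.mulVec (v ω) + ε ω) → ∀ ω,
        Sv ω y - α ⬝ᵥ (fun j => Sum.elim (Sv ω) (v ω) (sel j)) = a ⬝ᵥ v ω + b ⬝ᵥ ε ω := by
      intro v Sv hsem ω
      have h0 := hrepr v Sv hsem ω
      rw [aux_sel_split sel α (Sv ω) (v ω), ← hwv, ← huv]
      have hy : Pi.single y (1:ℝ) ⬝ᵥ Sv ω = Sv ω y := by
        rw [single_dotProduct, one_mul]
      have hc : cy ⬝ᵥ Sv ω = a ⬝ᵥ v ω + uv ⬝ᵥ v ω + b ⬝ᵥ ε ω := by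
        rw [h0, Matrix.dotProduct_mulVec, ← hbdef, dotProduct_add,
          Matrix.dotProduct_mulVec, hadef, sub_dotProduct]
        ring
      have hcy' : cy ⬝ᵥ Sv ω = Sv ω y - wv ⬝ᵥ Sv ω := by
        rw [hcy, sub_dotProduct, hy]
      have := hc
      rw [hcy'] at this
      linarith [this]
    have hresS := hres A S hSEM
    -- quadratic expansion
    have hQ : ∀ (v : Ω → Fin q → ℝ), (∀ i, MemLp (fun ω => v ω i) 2 μ) →
        (∀ i j, ∫ ω, v ω i * ε ω j ∂μ = 0) →
        ∫ ω, (a ⬝ᵥ v ω + b ⬝ᵥ ε ω) ^ 2 ∂μ =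
          (∑ i, ∑ j, a i * a j * ∫ ω, v ω i * v ω j ∂μ) +
          (∑ i, ∑ j, b i * b j * ∫ ω, ε ω i * ε ω j ∂μ) := by
      intro v hv2 hvε
      have hvε' : ∀ (i : Fin q) (j : ι), ∫ ω, ε ω j * v ω i ∂μ = 0 := by
        intro i j
        calc ∫ ω, ε ω j * v ω i ∂μ = ∫ ω, v ω i * ε ω j ∂μ := by
              congr 1; funext ω; ring
          _ = 0 := hvε i j
      have hF2 : ∀ i : Fin q ⊕ ι,
          MemLp (fun ω => Sum.elim (v ω) (ε ω) i) 2 μ := by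
        intro i
        cases i with
        | inl i => exact hv2 i
        | inr i => exact hε2 i
      have key := aux_integral_dot_sq (Sum.elim a b) (fun ω => Sum.elim (v ω) (ε ω)) hF2
      have hdp : ∀ ω, a ⬝ᵥ v ω + b ⬝ᵥ ε ω
          = (Sum.elim a b) ⬝ᵥ (Sum.elim (v ω) (ε ω)) := by
        intro ω
        simp [dotProduct, Fintype.sum_sum_type]
      simp only [hdp]
      rw [key]
      rw [Fintype.sum_sum_type]
      simp only [Fintype.sum_sum_type, Sum.elim_inl, Sum.elim_inr, hvε, hvε', mul_zero,
        Finset.sum_const_zero, add_zero, zero_add]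
    -- the two quadratic quantities
    set QA : ℝ := ∑ i, ∑ j, a i * a j * ∫ ω, A ω i * A ω j ∂μ with hQAdef
    set Eε : ℝ := ∑ i, ∑ j, b i * b j * ∫ ω, ε ω i * ε ω j ∂μ with hEεdef
    -- lOLS value
    have hlOLS : lOLS α = QA + Eε := by
      have h1 : lOLS α = ∫ ω, (a ⬝ᵥ A ω + b ⬝ᵥ ε ω)^2 ∂μ := by
        show (∫ ω, (S ω y - α ⬝ᵥ Zs ω)^2 ∂μ) = _
        congr 1; funext ω
        rw [show α ⬝ᵥ Zs ω = α ⬝ᵥ (fun j => Sum.elim (S ω) (A ω) (sel j)) from rfl, hresS ω]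
      rw [h1, hQ A hA2 hAε]
    -- lIV value
    have hg : (fun i => ∫ ω, A ω i * (S ω y - α ⬝ᵥ Zs ω) ∂μ) = MA.mulVec a := by
      funext i
      have h1 : ∀ ω, A ω i * (S ω y - α ⬝ᵥ Zs ω)
          = (∑ k, a k * (A ω i * A ω k)) + ∑ l, b l * (A ω i * ε ω l) := by
        intro ω
        rw [show α ⬝ᵥ Zs ω = α ⬝ᵥ (fun j => Sum.elim (S ω) (A ω) (sel j)) from rfl, hresS ω]
        simp only [dotProduct, mul_add, Finset.mul_sum]
        congr 1
        · exact Finset.sum_congr rfl fun k _ => by ring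
        · exact Finset.sum_congr rfl fun l _ => by ring
      rw [show (∫ ω, A ω i * (S ω y - α ⬝ᵥ Zs ω) ∂μ)
          = ∫ ω, ((∑ k, a k * (A ω i * A ω k)) + ∑ l, b l * (A ω i * ε ω l)) ∂μ from by
        congr 1; funext ω; exact h1 ω]
      rw [integral_add, integral_finset_sum, integral_finset_sum]
      · simp only [integral_const_mul, hAε, mul_zero, Finset.sum_const_zero, add_zero]
        rw [show MA.mulVec a i = ∑ k, MA i k * a k from by
          simp [Matrix.mulVec, dotProduct]]
        exact Finset.sum_congr rfl fun k _ => by rw [hMAapp]; ring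
      · exact fun l _ => (aux_l2_mul_int (hA2 i) (hε2 l)).const_mul _
      · exact fun k _ => (aux_l2_mul_int (hA2 i) (hA2 k)).const_mul _
      · exact integrable_finset_sum _ fun k _ => (aux_l2_mul_int (hA2 i) (hA2 k)).const_mul _
      · exact integrable_finset_sum _ fun l _ => (aux_l2_mul_int (hA2 i) (hε2 l)).const_mul _
    have hlIV : lIV α = QA := by
      show ((fun i => ∫ ω, A ω i * (S ω y - α ⬝ᵥ Zs ω) ∂μ) ⬝ᵥ
        (MA⁻¹.mulVec fun i => ∫ ω, A ω i * (S ω y - α ⬝ᵥ Zs ω) ∂μ)) = QA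
      rw [hg, Matrix.mulVec_mulVec, Matrix.nonsing_inv_mul _ hMAdet, Matrix.one_mulVec]
      rw [show MA.mulVec a ⬝ᵥ a = a ⬝ᵥ MA.mulVec a from dotProduct_comm _ _]
      rw [aux_dot_mulVec]
      exact Finset.sum_congr rfl fun i _ => Finset.sum_congr rfl fun j _ => by
        rw [hMAapp]
    -- the worst-case value
    set sup : ℝ := (1/(1-κ)) * QA + Eε with hsupdef
    -- factoring lemma
    have hfact : ∀ c : ℝ, (∑ i, ∑ j, a i * a j * (c * ∫ ω, A ω i * A ω j ∂μ)) = c * QA := by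
      intro c
      rw [hQAdef, Finset.mul_sum]
      refine Finset.sum_congr rfl fun i _ => ?_
      rw [Finset.mul_sum]
      exact Finset.sum_congr rfl fun j _ => by ring
    -- upper bound
    have hub : ∀ x ∈ W α, x ≤ sup := by
      rintro x ⟨v, Sv, hvmeas, hv2, hvε, hpsd, hsem, hx⟩
      have hxval : x = (∑ i, ∑ j, a i * a j * ∫ ω, v ω i * v ω j ∂μ) + Eε := by
        rw [hx, show (∫ ω, (Sv ω y - α ⬝ᵥ fun j => Sum.elim (Sv ω) (v ω) (sel j)) ^ 2 ∂μ)
          = ∫ ω, (a ⬝ᵥ v ω + b ⬝ᵥ ε ω)^2 ∂μ from by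
            congr 1; funext ω; rw [hres v Sv hsem ω]]
        rw [hQ v hv2 hvε]
      have hps := hpsd.dotProduct_mulVec_nonneg a
      have hexp : (0:ℝ) ≤ (1/(1-κ)) * QA - ∑ i, ∑ j, a i * a j * ∫ ω, v ω i * v ω j ∂μ := by
        have h2 : star a ⬝ᵥ (((1 / (1 - κ)) • MA -
            (Matrix.of fun i j => ∫ ω, v ω i * v ω j ∂μ)).mulVec a)
            = (1/(1-κ)) * QA - ∑ i, ∑ j, a i * a j * ∫ ω, v ω i * v ω j ∂μ := by
          have hQA' : a ⬝ᵥ MA.mulVec a = QA := by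
            rw [aux_dot_mulVec]
            exact Finset.sum_congr rfl fun i _ => Finset.sum_congr rfl fun j _ => by
              rw [hMAapp]
          have hV' : a ⬝ᵥ (Matrix.of fun i j => ∫ ω, v ω i * v ω j ∂μ).mulVec a
              = ∑ i, ∑ j, a i * a j * ∫ ω, v ω i * v ω j ∂μ := by
            rw [aux_dot_mulVec]
            simp only [Matrix.of_apply]
          rw [show (star a : Fin q → ℝ) = a from funext fun i => star_trivial _,
            Matrix.sub_mulVec, dotProduct_sub, Matrix.smul_mulVec,
            dotProduct_smul, smul_eq_mul, hQA', hV']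
        rw [h2] at hps
        exact hps
      rw [hxval, hsupdef]
      linarith
    -- the supremum is attained
    have hmem : sup ∈ W α := by
      set t : ℝ := Real.sqrt (1/(1-κ)) with htdef
      have ht2 : t * t = 1/(1-κ) :=
        Real.mul_self_sqrt (by positivity)
      set v₀ : Ω → Fin q → ℝ := fun ω i => t * A ω i with hv₀def
      set Sv₀ : Ω → ι → ℝ := fun ω => C.mulVec (Mᵀ.mulVec (v₀ ω) + ε ω) with hSv₀def
      have hv₀2 : ∀ i, MemLp (fun ω => v₀ ω i) 2 μ := fun i => (hA2 i).const_mul t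
      have hv₀ε : ∀ (i : Fin q) (j : ι), ∫ ω, v₀ ω i * ε ω j ∂μ = 0 := by
        intro i j
        rw [show (∫ ω, v₀ ω i * ε ω j ∂μ) = ∫ ω, t * (A ω i * ε ω j) ∂μ from by
          congr 1; funext ω; rw [hv₀def]; ring]
        rw [integral_const_mul, hAε, mul_zero]
      have hv₀v₀ : ∀ i j, (∫ ω, v₀ ω i * v₀ ω j ∂μ) = (1/(1-κ)) * ∫ ω, A ω i * A ω j ∂μ := by
        intro i j
        rw [show (∫ ω, v₀ ω i * v₀ ω j ∂μ) = ∫ ω, (t*t) * (A ω i * A ω j) ∂μ from by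
          congr 1; funext ω; rw [hv₀def]; ring]
        rw [integral_const_mul, ht2]
      have hsem₀ : ∀ ω, Sv₀ ω = Bᵀ.mulVec (Sv₀ ω) + Mᵀ.mulVec (v₀ ω) + ε ω := by
        intro ω
        rw [add_assoc]
        exact hSEM' (Mᵀ.mulVec (v₀ ω) + ε ω)
      refine ⟨v₀, Sv₀, ?_, hv₀2, hv₀ε, ?_, hsem₀, ?_⟩
      · rw [hv₀def]
        exact measurable_pi_iff.mpr fun i => ((measurable_pi_apply i).comp hAmeas).const_mul t
      · have hzero : ((1 / (1 - κ)) • MA -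
            (Matrix.of fun i j => ∫ ω, v₀ ω i * v₀ ω j ∂μ) :
            Matrix (Fin q) (Fin q) ℝ) = 0 := by
          ext i j
          simp only [Matrix.sub_apply, Matrix.smul_apply, Matrix.of_apply, Matrix.zero_apply,
            smul_eq_mul, hv₀v₀, hMAapp]
          ring
        rw [hzero]
        exact Matrix.PosSemidef.zero
      · rw [show (∫ ω, (Sv₀ ω y - α ⬝ᵥ fun j => Sum.elim (Sv₀ ω) (v₀ ω) (sel j)) ^ 2 ∂μ)
          = ∫ ω, (a ⬝ᵥ v₀ ω + b ⬝ᵥ ε ω)^2 ∂μ from by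
            congr 1; funext ω; rw [hres v₀ Sv₀ hsem₀ ω]]
        rw [hQ v₀ hv₀2 hv₀ε]
        simp only [hv₀v₀]
        rw [hfact, hsupdef]
    -- conclude
    have hs : sSup (W α) = sup :=
      le_antisymm (csSup_le ⟨sup, hmem⟩ hub) (le_csSup ⟨sup, fun x hx => hub x hx⟩ hmem)
    rw [hs, hlOLS, hlIV, hsupdef]
    field_simp
    ring
  refine ⟨hsup, ?_⟩
  intro α0
  have key : ∀ α, (1 - κ) * lOLS α + κ * lIV α = (1 - κ) * sSup (W α) := by
    intro α
    rw [hsup α]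
    field_simp
  constructor
  · intro h α
    have h2 := h α
    rw [key, key] at h2
    exact le_of_mul_le_mul_left h2 h1κ
  · intro h α
    rw [key, key]
    exact mul_le_mul_of_nonneg_left (h α) (le_of_lt h1κ)
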